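/- Let Φ, Ψ be Young functions, φ : (0,∞) → (0,∞) almost decreasing with φ(r)rⁿ almost increasing, and ρ : (0,∞) → (0,∞). If the generalized fractional maximal operator M_ρ is bounded from the Orlicz–Morrey space L^{(Φ,φ)}(ℝⁿ) to the weak Orlicz–Morrey space wL^{(Ψ,φ)}(ℝⁿ), then there exists A > 0 such that for all r > 0: (sup_{0 < t ≤ r} ρ(t)) · Φ⁻¹(φ(r)) ≤ A · Ψ⁻¹(φ(r)). -/

import Mathlib

open MeasureTheory ENNReal NNReal Metric Set Filter Topology

noncomputable def geninv (Φ : ℝ≥0∞ → ℝ≥0∞) (u : ℝ≥0∞) : ℝ≥0∞ :=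
  sInf {t : ℝ≥0∞ | u < Φ t}

/-- Generalized Young function (class Φ_Y of the paper): increasing, vanishing at 0,
infinite at ∞, convex, left continuous, nondegenerate. -/
def IsYoung (Φ : ℝ≥0∞ → ℝ≥0∞) : Prop :=
  Monotone Φ ∧ Φ 0 = 0 ∧ Φ ⊤ = ⊤ ∧
    (∀ x y a b : ℝ≥0∞, a + b = 1 → Φ (a * x + b * y) ≤ a * Φ x + b * Φ y) ∧
    (∀ t : ℝ≥0∞, 0 < t → ContinuousWithinAt Φ (Set.Iio t) t) ∧
    (∃ t : ℝ≥0∞, 0 < t ∧ Φ t < ⊤) ∧ (∃ t : ℝ≥0∞, t ≠ ⊤ ∧ 0 < Φ t)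

/-- The class `G^dec`: positive, almost decreasing, and `r ↦ φ(r) rⁿ` almost increasing. -/
def Gdec (n : ℕ) (φ : ℝ → ℝ≥0∞) : Prop :=
  (∀ r : ℝ, 0 < r → 0 < φ r ∧ φ r < ⊤) ∧
    ∃ C : ℝ≥0∞, 0 < C ∧ C ≠ ⊤ ∧ ∀ r s : ℝ, 0 < r → r < s →
      φ s ≤ C * φ r ∧ φ r * ENNReal.ofReal r ^ n ≤ C * (φ s * ENNReal.ofReal s ^ n)

/-- Orlicz–Morrey functional on a single ball `B(a,r)`. -/
noncomputable def ballNorm (Φ : ℝ≥0∞ → ℝ≥0∞) (φ : ℝ → ℝ≥0∞) {d : ℕ}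
    (a : EuclideanSpace ℝ (Fin d)) (r : ℝ) (f : EuclideanSpace ℝ (Fin d) → ℝ≥0∞) : ℝ≥0∞ :=
  sInf {l : ℝ≥0∞ | 0 < l ∧
    (∫⁻ x in ball a r, Φ (f x / l)) ≤ φ r * volume (ball a r)}

/-- Weak Orlicz–Morrey functional on a single ball `B(a,r)`. -/
noncomputable def wBallNorm (Φ : ℝ≥0∞ → ℝ≥0∞) (φ : ℝ → ℝ≥0∞) {d : ℕ}
    (a : EuclideanSpace ℝ (Fin d)) (r : ℝ) (f : EuclideanSpace ℝ (Fin d) → ℝ≥0∞) : ℝ≥0∞ :=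
  sInf {l : ℝ≥0∞ | 0 < l ∧ ∀ t : ℝ≥0∞, 0 < t → t ≠ ⊤ →
    Φ t * volume {x ∈ ball a r | t < f x / l} ≤ φ r * volume (ball a r)}

/-- Orlicz–Morrey norm. -/
noncomputable def omNorm (Φ : ℝ≥0∞ → ℝ≥0∞) (φ : ℝ → ℝ≥0∞) {d : ℕ}
    (f : EuclideanSpace ℝ (Fin d) → ℝ≥0∞) : ℝ≥0∞ :=
  ⨆ (a : EuclideanSpace ℝ (Fin d)) (r : ℝ) (_ : 0 < r), ballNorm Φ φ a r f

/-- Weak Orlicz–Morrey norm. -/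
noncomputable def womNorm (Φ : ℝ≥0∞ → ℝ≥0∞) (φ : ℝ → ℝ≥0∞) {d : ℕ}
    (f : EuclideanSpace ℝ (Fin d) → ℝ≥0∞) : ℝ≥0∞ :=
  ⨆ (a : EuclideanSpace ℝ (Fin d)) (r : ℝ) (_ : 0 < r), wBallNorm Φ φ a r f

/-- Generalized fractional maximal operator `M_ρ`. -/
noncomputable def Mrho {d : ℕ} (ρ : ℝ → ℝ≥0∞)
    (f : EuclideanSpace ℝ (Fin d) → ℝ≥0∞) (x : EuclideanSpace ℝ (Fin d)) : ℝ≥0∞ :=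
  ⨆ (a : EuclideanSpace ℝ (Fin d)) (s : ℝ) (_ : 0 < s) (_ : x ∈ ball a s),
    ρ s * ((volume (ball a s))⁻¹ * ∫⁻ y in ball a s, f y)

lemma lint_ind {d : ℕ} (S T : Set (EuclideanSpace ℝ (Fin d))) (hT : MeasurableSet T) (c : ℝ≥0∞) :
    ∫⁻ x in S, T.indicator (fun _ => c) x = c * volume (T ∩ S) := by
  rw [lintegral_indicator hT, setLIntegral_const, Measure.restrict_apply hT]

lemma vol_ball {d : ℕ} (a : EuclideanSpace ℝ (Fin d)) {r : ℝ} (hr : 0 < r) :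
    volume (ball a r)
      = ENNReal.ofReal r ^ d * volume (ball (0 : EuclideanSpace ℝ (Fin d)) 1) := by
  rcases Nat.eq_zero_or_pos d with hd | hd
  · subst hd
    have h1 : (ball a r : Set (EuclideanSpace ℝ (Fin 0))) = univ :=
      eq_univ_of_forall fun y => by
        simp [mem_ball, Subsingleton.elim y a, hr]
    have h2 : (ball (0 : EuclideanSpace ℝ (Fin 0)) 1) = univ :=
      eq_univ_of_forall fun y => by
        simp [mem_ball, Subsingleton.elim y (0 : EuclideanSpace ℝ (Fin 0))]
    simp [h1, h2]
  · haveI : Nonempty (Fin d) := ⟨⟨0, hd⟩⟩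
    haveI : Nontrivial (EuclideanSpace ℝ (Fin d)) := inferInstance
    rw [Measure.addHaar_ball (μ := volume) a hr.le,
      show Module.finrank ℝ (EuclideanSpace ℝ (Fin d)) = d from finrank_euclideanSpace_fin,
      ENNReal.ofReal_pow hr.le]

lemma sSup_Iio_enn (c : ℝ≥0∞) : sSup (Iio c) = c := by
  apply le_antisymm (sSup_le fun t ht => ht.le)
  rcases eq_or_ne c 0 with h | h
  · simp [h]
  by_contra hlt
  push_neg at hlt
  obtain ⟨t, h1, h2⟩ := exists_between hlt
  exact absurd (le_sSup (mem_Iio.2 h2)) (not_le.2 h1)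


/-- Necessity: boundedness of `M_ρ` from `L^{(Φ,φ)}` to `wL^{(Ψ,φ)}` implies the
pointwise condition on `ρ, Φ, Ψ, φ`. -/
theorem stmt19 {d : ℕ} (Φ Ψ : ℝ≥0∞ → ℝ≥0∞) (hΦ : IsYoung Φ) (hΨ : IsYoung Ψ)
    (φ : ℝ → ℝ≥0∞) (hφ : Gdec d φ)
    (ρ : ℝ → ℝ≥0∞) (hρ : ∀ t : ℝ, 0 < t → 0 < ρ t ∧ ρ t < ⊤)
    (C : ℝ≥0∞) (hC : C ≠ ⊤)
    (hbdd : ∀ f : EuclideanSpace ℝ (Fin d) → ℝ≥0∞,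
      womNorm Ψ φ (Mrho ρ f) ≤ C * omNorm Φ φ f) :
    ∃ A : ℝ≥0∞, 0 < A ∧ A ≠ ⊤ ∧ ∀ r : ℝ, 0 < r →
      (⨆ t ∈ Set.Ioc (0 : ℝ) r, ρ t) * geninv Φ (φ r) ≤ A * geninv Ψ (φ r) := by
  obtain ⟨hΦmono, hΦ0, hΦtop, hΦconv, -, -, -⟩ := hΦ
  obtain ⟨hΨmono, -, -, -, -, -, -⟩ := hΨ
  obtain ⟨hφpos, C₀, hC₀pos, hC₀top, hC₀⟩ := hφ
  set C₂ : ℝ≥0∞ := max C₀ 1 with hC₂def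
  have hC₂1 : 1 ≤ C₂ := le_max_right _ _
  have hC₂0 : C₂ ≠ 0 := by positivity
  have hC₂top : C₂ ≠ ⊤ := by
    exact (max_lt hC₀top.lt_top one_lt_top).ne
  set A : ℝ≥0∞ := C * C₂ + 1 with hAdef
  have hAtop : A ≠ ⊤ := by
    simp only [hAdef]
    exact ENNReal.add_ne_top.2 ⟨ENNReal.mul_ne_top hC hC₂top, one_ne_top⟩
  refine ⟨A, lt_of_lt_of_le zero_lt_one le_add_self, hAtop, ?_⟩
  intro r hr
  have hB0 : volume (ball (0 : EuclideanSpace ℝ (Fin d)) r) ≠ 0 :=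
    (measure_ball_pos volume 0 hr).ne'
  have hBtop : volume (ball (0 : EuclideanSpace ℝ (Fin d)) r) ≠ ⊤ :=
    (measure_ball_lt_top).ne
  -- the key inequality for a single level t below the generalized inverse
  have key : ∀ t : ℝ≥0∞, t < geninv Φ (φ r) →
      (⨆ u ∈ Set.Ioc (0 : ℝ) r, ρ u) * t ≤ A * geninv Ψ (φ r) := by
    intro t ht
    have hΦt : Φ t ≤ φ r := by
      by_contra h
      push_neg at h
      exact absurd (sInf_le (show t ∈ {s : ℝ≥0∞ | φ r < Φ s} from h)) (not_le.2 ht)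
    set f : EuclideanSpace ℝ (Fin d) → ℝ≥0∞ :=
      (ball (0 : EuclideanSpace ℝ (Fin d)) r).indicator (fun _ => t) with hfdef
    -- convexity bound
    have hconv : Φ (t / C₂) ≤ C₂⁻¹ * Φ t := by
      have h1 : C₂⁻¹ + (1 - C₂⁻¹) = 1 :=
        add_tsub_cancel_of_le (ENNReal.inv_le_one.2 hC₂1)
      have h2 := hΦconv t 0 C₂⁻¹ (1 - C₂⁻¹) h1
      simpa [hΦ0, ENNReal.div_eq_inv_mul] using h2
    -- Step 1 : omNorm of f is at most C₂
    have step1 : omNorm Φ φ f ≤ C₂ := by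
      refine iSup_le fun a => iSup_le fun s => iSup_le fun hs => sInf_le ?_
      refine ⟨lt_of_lt_of_le zero_lt_one hC₂1, ?_⟩
      have hint : (∫⁻ x in ball a s, Φ (f x / C₂))
          = Φ (t / C₂) * volume (ball (0 : EuclideanSpace ℝ (Fin d)) r ∩ ball a s) := by
        have heq : (fun x => Φ (f x / C₂))
            = (ball (0 : EuclideanSpace ℝ (Fin d)) r).indicator (fun _ => Φ (t / C₂)) := by
          funext x
          by_cases hx : x ∈ ball (0 : EuclideanSpace ℝ (Fin d)) r
          · simp [hfdef, indicator_of_mem hx]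
          · simp [hfdef, indicator_of_notMem hx, ENNReal.zero_div, hΦ0]
        rw [heq, lint_ind _ _ measurableSet_ball]
      rw [hint]
      rcases le_or_gt s r with hsr | hrs
      · -- small ball : use almost decreasingness
        have hφrs : φ r ≤ C₂ * φ s := by
          rcases eq_or_lt_of_le hsr with h | h
          · subst h
            exact le_mul_of_one_le_left zero_le hC₂1
          · exact (hC₀ s r hs h).1.trans
              (mul_le_mul_left (le_max_left _ _) _)
        calc Φ (t / C₂) * volume (ball (0 : EuclideanSpace ℝ (Fin d)) r ∩ ball a s)
            ≤ (C₂⁻¹ * Φ t) * volume (ball a s) :=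
              mul_le_mul' hconv (measure_mono inter_subset_right)
          _ ≤ (C₂⁻¹ * (C₂ * φ s)) * volume (ball a s) :=
              mul_le_mul_left (mul_le_mul_right (hΦt.trans hφrs) _) _
          _ = φ s * volume (ball a s) := by
              rw [← mul_assoc, ENNReal.inv_mul_cancel hC₂0 hC₂top, one_mul]
      · -- big ball : use almost increasingness of φ(r)rⁿ
        have h2 : φ r * volume (ball (0 : EuclideanSpace ℝ (Fin d)) r)
            ≤ C₂ * (φ s * volume (ball a s)) := by
          rw [vol_ball (0 : EuclideanSpace ℝ (Fin d)) hr, vol_ball a (hr.trans hrs)]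
          calc φ r * (ENNReal.ofReal r ^ d * volume (ball (0 : EuclideanSpace ℝ (Fin d)) 1))
              = (φ r * ENNReal.ofReal r ^ d) * volume (ball (0 : EuclideanSpace ℝ (Fin d)) 1) := by
                ring
            _ ≤ (C₀ * (φ s * ENNReal.ofReal s ^ d)) * volume (ball (0 : EuclideanSpace ℝ (Fin d)) 1) :=
                mul_le_mul_left (hC₀ r s hr hrs).2 _
            _ ≤ (C₂ * (φ s * ENNReal.ofReal s ^ d)) * volume (ball (0 : EuclideanSpace ℝ (Fin d)) 1) :=
                mul_le_mul_left (mul_le_mul_left (le_max_left _ _) _) _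
            _ = C₂ * (φ s * (ENNReal.ofReal s ^ d * volume (ball (0 : EuclideanSpace ℝ (Fin d)) 1))) := by
                ring
        calc Φ (t / C₂) * volume (ball (0 : EuclideanSpace ℝ (Fin d)) r ∩ ball a s)
            ≤ (C₂⁻¹ * φ r) * volume (ball (0 : EuclideanSpace ℝ (Fin d)) r) :=
              mul_le_mul' (hconv.trans (mul_le_mul_right hΦt _)) (measure_mono inter_subset_left)
          _ = C₂⁻¹ * (φ r * volume (ball (0 : EuclideanSpace ℝ (Fin d)) r)) := by ring
          _ ≤ C₂⁻¹ * (C₂ * (φ s * volume (ball a s))) := mul_le_mul_right h2 _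
          _ = φ s * volume (ball a s) := by
              rw [← mul_assoc, ENNReal.inv_mul_cancel hC₂0 hC₂top, one_mul]
    -- Step 5 : pointwise lower bound for the maximal function
    have hpt : ∀ x ∈ ball (0 : EuclideanSpace ℝ (Fin d)) r,
        (⨆ u ∈ Set.Ioc (0 : ℝ) r, ρ u) * t ≤ Mrho ρ f x := by
      intro x hx
      have hnx : ‖x‖ < r := by
        simpa [mem_ball, dist_eq_norm] using hx
      simp_rw [ENNReal.iSup_mul]
      refine iSup_le fun u => iSup_le fun hu => ?_
      obtain ⟨hu0, hur⟩ := hu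
      set a : EuclideanSpace ℝ (Fin d) := (1 - u / r) • x with hadef
      have h1u : (0 : ℝ) ≤ 1 - u / r := by
        have : u / r ≤ 1 := (div_le_one hr).2 hur
        linarith
      have hxa : x ∈ ball a u := by
        rw [mem_ball, dist_eq_norm]
        have hxa' : x - a = (u / r) • x := by
          rw [hadef]; module
        rw [hxa', norm_smul, Real.norm_eq_abs, abs_of_nonneg (by positivity)]
        calc u / r * ‖x‖ < u / r * r := by
              exact mul_lt_mul_of_pos_left hnx (by positivity)
          _ = u := by field_simp
      have hsub : ball a u ⊆ ball (0 : EuclideanSpace ℝ (Fin d)) r := by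
        intro y hy
        rw [mem_ball] at hy ⊢
        have hna : ‖a‖ ≤ (1 - u / r) * r := by
          rw [hadef, norm_smul, Real.norm_eq_abs, abs_of_nonneg h1u]
          exact mul_le_mul_of_nonneg_left hnx.le h1u
        have hda : dist a 0 = ‖a‖ := by rw [dist_zero_right]
        have h3 : (1 - u / r) * r = r - u := by field_simp
        calc dist y 0 ≤ dist y a + dist a 0 := dist_triangle _ _ _
          _ < u + ‖a‖ := by rw [hda]; exact add_lt_add_of_lt_of_le hy le_rfl
          _ ≤ u + (r - u) := by rw [← h3]; linarith
          _ = r := by ring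
      have hv0 : volume (ball a u) ≠ 0 := (measure_ball_pos volume a hu0).ne'
      have hvtop : volume (ball a u) ≠ ⊤ := (measure_ball_lt_top).ne
      have hint2 : (∫⁻ y in ball a u, f y) = t * volume (ball a u) := by
        rw [hfdef, lint_ind _ _ measurableSet_ball, inter_eq_self_of_subset_right hsub]
      have hval : ρ u * ((volume (ball a u))⁻¹ * ∫⁻ y in ball a u, f y) = ρ u * t := by
        rw [hint2, mul_comm t, ← mul_assoc ((volume (ball a u))⁻¹),
          ENNReal.inv_mul_cancel hv0 hvtop, one_mul]
      calc ρ u * t = ρ u * ((volume (ball a u))⁻¹ * ∫⁻ y in ball a u, f y) := hval.symm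
        _ ≤ Mrho ρ f x :=
          le_iSup_of_le a (le_iSup_of_le u (le_iSup_of_le hu0 (le_iSup_of_le hxa le_rfl)))
    -- Step 3/4 : extract an element of the weak set
    have step3 : wBallNorm Ψ φ (0 : EuclideanSpace ℝ (Fin d)) r (Mrho ρ f) ≤ C * C₂ := by
      refine le_trans ?_ ((hbdd f).trans (mul_le_mul_right step1 C))
      exact le_iSup_of_le (0 : EuclideanSpace ℝ (Fin d)) (le_iSup_of_le r (le_iSup_of_le hr le_rfl))
    have step4 : wBallNorm Ψ φ (0 : EuclideanSpace ℝ (Fin d)) r (Mrho ρ f) < A := by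
      refine lt_of_le_of_lt step3 ?_
      simpa [hAdef] using ENNReal.lt_add_right (ENNReal.mul_ne_top hC hC₂top) one_ne_zero
    obtain ⟨l, hl, hlA⟩ := sInf_lt_iff.mp step4
    obtain ⟨hl0, hlw⟩ := hl
    have hltop : l ≠ ⊤ := hlA.ne_top
    -- Step 6
    have hw : (⨆ u ∈ Set.Ioc (0 : ℝ) r, ρ u) * t / l ≤ geninv Ψ (φ r) := by
      by_contra hcon
      push_neg at hcon
      obtain ⟨t', ht1, ht2⟩ := exists_between hcon
      have ht'top : t' ≠ ⊤ := ht2.ne_top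
      have ht'0 : 0 < t' := lt_of_le_of_lt zero_le ht1
      have hset : {x ∈ ball (0 : EuclideanSpace ℝ (Fin d)) r | t' < Mrho ρ f x / l}
          = ball (0 : EuclideanSpace ℝ (Fin d)) r := by
        refine Subset.antisymm (sep_subset _ _) fun x hx => ?_
        exact ⟨hx, lt_of_lt_of_le ht2 (ENNReal.div_le_div_right (hpt x hx) l)⟩
      have h5 := hlw t' ht'0 ht'top
      rw [hset] at h5
      have hΨle : Ψ t' ≤ φ r := (ENNReal.mul_le_mul_iff_left hB0 hBtop).1 h5
      obtain ⟨s', hs'mem, hs'lt⟩ := sInf_lt_iff.mp ht1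
      exact absurd hΨle (not_le.2 (lt_of_lt_of_le hs'mem (hΨmono hs'lt.le)))
    have h7 : (⨆ u ∈ Set.Ioc (0 : ℝ) r, ρ u) * t ≤ geninv Ψ (φ r) * l :=
      (ENNReal.div_le_iff_le_mul (Or.inl hl0.ne') (Or.inl hltop)).mp hw
    calc (⨆ u ∈ Set.Ioc (0 : ℝ) r, ρ u) * t ≤ geninv Ψ (φ r) * l := h7
      _ ≤ geninv Ψ (φ r) * A := mul_le_mul_right hlA.le _
      _ = A * geninv Ψ (φ r) := mul_comm _ _
  -- conclude by taking the supremum over t < geninv Φ (φ r)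
  have hceq : (⨆ u ∈ Set.Ioc (0 : ℝ) r, ρ u) * geninv Φ (φ r)
      = ⨆ t ∈ Iio (geninv Φ (φ r)), (⨆ u ∈ Set.Ioc (0 : ℝ) r, ρ u) * t := by
    conv_lhs => rw [← sSup_Iio_enn (geninv Φ (φ r))]
    exact ENNReal.mul_sSup
  rw [hceq]
  exact iSup₂_le fun t ht => key t ht
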